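/- Let n(t) := (cos t, sin t, 0) and fix κ² > 0. Define G(u) := (1/2π) ∫_{−π}^{π} |u'(t)|² dt + (κ²/2π) ∫_{−π}^{π} |u(t) × n(t)|² dt on C¹ 2π-periodic maps u : ℝ → ℝ³ satisfying (1/2π) ∫_{−π}^{π} |u(t)|² dt = 1. If u minimizes G in this class, then 0 < G(u) ≤ min{ κ²/2, 1 }. -/

import Mathlib

open Real Set MeasureTheory

/-- Squared Euclidean norm of a vector in `ℝ³`. -/
noncomputable def sq3 (v : Fin 3 → ℝ) : ℝ := v 0 ^ 2 + v 1 ^ 2 + v 2 ^ 2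

/-- The outward unit normal `n(t) = (cos t, sin t, 0)` to the unit circle. -/
noncomputable def nvec (t : ℝ) : Fin 3 → ℝ := ![Real.cos t, Real.sin t, 0]

/-- The normalized relaxed energy `G(u) = (1/2π)∫|u'|² + (κ²/2π)∫|u × n|²`. -/
noncomputable def relaxedEnergy (κ : ℝ) (u : ℝ → Fin 3 → ℝ) : ℝ :=
  (1 / (2 * π)) * (∫ t in (-π)..π, sq3 (deriv u t))
    + (κ ^ 2 / (2 * π)) * ∫ t in (-π)..π, sq3 (crossProduct (u t) (nvec t))

/-- The admissible class of the relaxed problem: `C¹` `2π`-periodic maps with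
`(1/2π)∫|u|² = 1`. -/
def AdmRelaxed (u : ℝ → Fin 3 → ℝ) : Prop :=
  ContDiff ℝ 1 u ∧ (∀ t : ℝ, u (t + 2 * π) = u t) ∧
  (1 / (2 * π)) * (∫ t in (-π)..π, sq3 (u t)) = 1

lemma sq3_cross (a b : Fin 3 → ℝ) : sq3 (crossProduct a b) =
    (a 1 * b 2 - a 2 * b 1)^2 + (a 2 * b 0 - a 0 * b 2)^2 + (a 0 * b 1 - a 1 * b 0)^2 := by
  simp [sq3, cross_apply]

lemma sq3_nonneg (v : Fin 3 → ℝ) : 0 ≤ sq3 v := by unfold sq3; positivity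

lemma sq3_eq_zero' (v : Fin 3 → ℝ) (h : sq3 v = 0) : v = 0 := by
  have h0 := sq_nonneg (v 0); have h1 := sq_nonneg (v 1); have h2 := sq_nonneg (v 2)
  unfold sq3 at h
  have e0 : v 0 = 0 := pow_eq_zero_iff two_ne_zero |>.mp (le_antisymm (by linarith) h0)
  have e1 : v 1 = 0 := pow_eq_zero_iff two_ne_zero |>.mp (le_antisymm (by linarith) h1)
  have e2 : v 2 = 0 := pow_eq_zero_iff two_ne_zero |>.mp (le_antisymm (by linarith) h2)
  funext i
  fin_cases i <;> simpa

lemma zeroOn {f : ℝ → ℝ} (hc : Continuous f) (h0 : ∀ t, 0 ≤ f t)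
    (hI : (∫ t in (-π)..π, f t) = 0) : ∀ t ∈ Icc (-π) π, f t = 0 := by
  intro t ht
  by_contra h
  have hpos : 0 < f t := (h0 t).lt_of_ne (Ne.symm h)
  have := intervalIntegral.integral_pos (by linarith [pi_pos]) hc.continuousOn
    (fun x _ => h0 x) ⟨t, ht, hpos⟩
  linarith

lemma contDiff_nvec : ContDiff ℝ 1 nvec := by
  apply contDiff_pi.mpr
  intro i
  fin_cases i <;> simp [nvec] <;>
    first | exact Real.contDiff_cos | exact Real.contDiff_sin | exact contDiff_const

lemma deriv_nvec (t : ℝ) : deriv nvec t = ![-Real.sin t, Real.cos t, 0] := by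
  have : HasDerivAt nvec ![-Real.sin t, Real.cos t, 0] t := by
    apply hasDerivAt_pi.mpr
    intro i
    fin_cases i <;> simp [nvec]
    · exact Real.hasDerivAt_cos t
    · exact Real.hasDerivAt_sin t
    · exact hasDerivAt_const t 0
  exact this.deriv

lemma energy_nvec (κ : ℝ) : relaxedEnergy κ nvec = 1 := by
  have h1 : (fun t => sq3 (deriv nvec t)) = fun _ => (1:ℝ) := by
    funext t
    rw [deriv_nvec]
    simp [sq3]
  have h2 : (fun t => sq3 (crossProduct (nvec t) (nvec t))) = fun _ => (0:ℝ) := by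
    funext t; rw [sq3_cross]; ring
  rw [relaxedEnergy, h1, h2]
  simp
  field_simp
  ring

lemma energy_const (κ : ℝ) : relaxedEnergy κ (fun _ => ![1,0,0]) = κ^2/2 := by
  have h1 : (fun t => sq3 (deriv (fun _ : ℝ => ![(1:ℝ),0,0]) t)) = fun _ => (0:ℝ) := by
    funext t
    rw [deriv_const]
    simp [sq3]
  have h2 : (fun t => sq3 (crossProduct ![(1:ℝ),0,0] (nvec t))) = fun t => Real.sin t ^ 2 := by
    funext t; rw [sq3_cross]; simp [nvec]
  rw [relaxedEnergy, h1]
  simp only [h2]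
  rw [integral_sin_sq]
  simp
  field_simp

lemma adm_const : AdmRelaxed (fun _ => ![1,0,0]) := by
  refine ⟨contDiff_const, fun t => rfl, ?_⟩
  have h : (fun _ : ℝ => sq3 ![(1:ℝ),0,0]) = fun _ => (1:ℝ) := by
    funext t; simp [sq3]
  rw [h, intervalIntegral.integral_const, smul_eq_mul, mul_one]
  have hπ := Real.pi_ne_zero
  field_simp
  ring

lemma adm_nvec : AdmRelaxed nvec := by
  refine ⟨contDiff_nvec, fun t => ?_, ?_⟩
  · funext i
    fin_cases i <;> simp [nvec]
  · have h : (fun t : ℝ => sq3 (nvec t)) = fun _ => (1:ℝ) := by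
      funext t
      simp [sq3, nvec]
    rw [h, intervalIntegral.integral_const, smul_eq_mul, mul_one]
    have hπ := Real.pi_ne_zero
    field_simp
    ring


/-- **Energy bounds for minimizers of the relaxed problem**: any minimizer `u`
of `G` under the `L²` constraint satisfies `0 < G(u) ≤ min{κ²/2, 1}`. -/
theorem relaxed_minimizer_energy_bounds
    (κ : ℝ) (hκ : 0 < κ ^ 2)
    (u : ℝ → Fin 3 → ℝ)
    (hu : AdmRelaxed u)
    (hmin : ∀ v : ℝ → Fin 3 → ℝ, AdmRelaxed v →
      relaxedEnergy κ u ≤ relaxedEnergy κ v) :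
    0 < relaxedEnergy κ u ∧ relaxedEnergy κ u ≤ min (κ ^ 2 / 2) 1 := by
  have hπ : 0 < π := Real.pi_pos
  obtain ⟨hC1, hper, hconstr⟩ := hu
  -- upper bound
  have hub : relaxedEnergy κ u ≤ min (κ ^ 2 / 2) 1 := by
    refine le_min ?_ ?_
    · have := hmin _ adm_const
      rwa [energy_const] at this
    · have := hmin _ adm_nvec
      rwa [energy_nvec] at this
  refine ⟨?_, hub⟩
  -- continuity facts
  have cu : Continuous u := hC1.continuous
  have cd : Continuous (deriv u) := hC1.continuous_deriv le_rfl
  have cui : ∀ i, Continuous fun t => u t i := fun i => (continuous_apply i).comp cu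
  have cdi : ∀ i, Continuous fun t => deriv u t i := fun i => (continuous_apply i).comp cd
  have cf : Continuous fun t => sq3 (deriv u t) := by
    simp only [sq3]
    exact (((cdi 0).pow 2).add ((cdi 1).pow 2)).add ((cdi 2).pow 2)
  have nv0 : ∀ t, nvec t 0 = Real.cos t := fun t => rfl
  have nv1 : ∀ t, nvec t 1 = Real.sin t := fun t => rfl
  have nv2 : ∀ t, nvec t 2 = 0 := fun t => rfl
  have hg : (fun t => sq3 (crossProduct (u t) (nvec t))) =
      fun t => (u t 2 * Real.sin t)^2 + (u t 2 * Real.cos t)^2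
        + (u t 0 * Real.sin t - u t 1 * Real.cos t)^2 := by
    funext t
    rw [sq3_cross, nv0, nv1, nv2]
    ring
  have cg : Continuous fun t => sq3 (crossProduct (u t) (nvec t)) := by
    rw [hg]
    exact ((((cui 2).mul Real.continuous_sin).pow 2).add
      (((cui 2).mul Real.continuous_cos).pow 2)).add
      ((((cui 0).mul Real.continuous_sin).sub ((cui 1).mul Real.continuous_cos)).pow 2)
  -- nonnegativity of both integrals
  have hA0 : 0 ≤ ∫ t in (-π)..π, sq3 (deriv u t) :=
    intervalIntegral.integral_nonneg (by linarith) (fun t _ => sq3_nonneg _)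
  have hB0 : 0 ≤ ∫ t in (-π)..π, sq3 (crossProduct (u t) (nvec t)) :=
    intervalIntegral.integral_nonneg (by linarith) (fun t _ => sq3_nonneg _)
  have hc1 : 0 < 1 / (2 * π) := by positivity
  have hc2 : 0 < κ ^ 2 / (2 * π) := by positivity
  have hGnn : 0 ≤ relaxedEnergy κ u :=
    add_nonneg (mul_nonneg hc1.le hA0) (mul_nonneg hc2.le hB0)
  rcases hGnn.lt_or_eq with h | h
  · exact h
  · -- G(u) = 0 leads to contradiction
    exfalso
    unfold relaxedEnergy at h
    have hA : (∫ t in (-π)..π, sq3 (deriv u t)) = 0 := by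
      have h1 : (1 / (2 * π)) * (∫ t in (-π)..π, sq3 (deriv u t)) = 0 := by
        nlinarith [mul_nonneg hc1.le hA0, mul_nonneg hc2.le hB0]
      exact (mul_eq_zero.mp h1).resolve_left (by positivity)
    have hB : (∫ t in (-π)..π, sq3 (crossProduct (u t) (nvec t))) = 0 := by
      have h1 : (κ ^ 2 / (2 * π)) * (∫ t in (-π)..π, sq3 (crossProduct (u t) (nvec t))) = 0 := by
        nlinarith [mul_nonneg hc1.le hA0, mul_nonneg hc2.le hB0]
      exact (mul_eq_zero.mp h1).resolve_left (by positivity)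
    -- the derivative vanishes on [-π, π]
    have hder0 : ∀ t ∈ Icc (-π) π, deriv u t = 0 := fun t ht =>
      sq3_eq_zero' _ (zeroOn cf (fun t => sq3_nonneg _) hA t ht)
    -- the derivative is 2π-periodic, hence vanishes everywhere
    have hperd : Function.Periodic (deriv u) (2 * π) := by
      intro t
      have he : (fun x => u (x + 2 * π)) = u := funext hper
      calc deriv u (t + 2 * π) = deriv (fun x => u (x + 2 * π)) t :=
            (deriv_comp_add_const u (2 * π) t).symm
        _ = deriv u t := by rw [he]
    have hall : ∀ t, deriv u t = 0 := by
      intro t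
      obtain ⟨y, hy, hEq⟩ := hperd.exists_mem_Ico (by linarith) t (-π)
      rw [hEq]
      exact hder0 y ⟨hy.1, by have := hy.2; linarith⟩
    -- hence u is constant
    have hconst : ∀ t, u t = u 0 := fun t =>
      is_const_of_deriv_eq_zero (hC1.differentiable one_ne_zero) hall t 0
    -- the constraint gives |u 0|² = 1
    have hsq : sq3 (u 0) = 1 := by
      have h : (fun t => sq3 (u t)) = fun _ => sq3 (u 0) := funext fun t => by rw [hconst t]
      rw [h, intervalIntegral.integral_const, smul_eq_mul] at hconstr
      have : (2 * π) * sq3 (u 0) = (1 : ℝ) * (2 * π) := by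
        field_simp at hconstr
        rw [show sq3 (u 0) = 1 by linarith [hconstr]]; ring
      have h2π : (2 * π) ≠ 0 := by positivity
      field_simp at this
      linarith
    -- the cross term vanishes at t = 0 and t = π/2
    have hcz : ∀ t ∈ Icc (-π) π,
        (u t 2 * Real.sin t)^2 + (u t 2 * Real.cos t)^2
          + (u t 0 * Real.sin t - u t 1 * Real.cos t)^2 = 0 := by
      have := zeroOn cg (fun t => sq3_nonneg _) hB
      intro t ht
      have h := this t ht
      rw [← congrFun hg t]
      exact h
    have hz0 := hcz 0 ⟨by linarith, by linarith⟩
    have hz1 := hcz (π/2) ⟨by linarith, by linarith⟩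
    rw [hconst (π/2)] at hz1
    simp [Real.sin_pi_div_two, Real.cos_pi_div_two] at hz0 hz1
    unfold sq3 at hsq
    nlinarith [sq_nonneg (u 0 0), sq_nonneg (u 0 1), sq_nonneg (u 0 2), hz0, hz1]
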